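/- Suppose G, Ω are continuous on (0,1), Ω(x) → C_ω ≠ 0 as x → 1⁻, G(x)Ω(x) = 0 on (0,1), and 2[(G²)'(x) + 4x/(1-x²)·G²(x)] + (Ω²)'(x) = 0 on (0,1). Then G ≡ 0 and Ω ≡ C_ω on (0,1). -/

import Mathlib

open Real Set Filter

lemma const_of_hasDerivAt_zero (f : ℝ → ℝ) (a b : ℝ)
    (hc : ContinuousOn f (Ioo a b)) (hd : ∀ x ∈ Ioo a b, HasDerivAt f 0 x) :
    ∀ x ∈ Ioo a b, ∀ y ∈ Ioo a b, f x = f y := by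
  have key : ∀ x ∈ Ioo a b, ∀ y ∈ Ioo a b, x < y → f x = f y := by
    intro x hx y hy hxy
    have hsub : Icc x y ⊆ Ioo a b := Icc_subset_Ioo hx.1 hy.2
    obtain ⟨c, hc', hc2⟩ := exists_hasDerivAt_eq_slope f (fun _ => 0) hxy
      (hc.mono hsub) (fun z hz => hd z (hsub (Ioo_subset_Icc_self hz)))
    have h0 : (f y - f x)/(y - x) = 0 := hc2.symm
    rcases div_eq_zero_iff.mp h0 with h0 | h0
    · linarith
    · exact absurd h0 (sub_ne_zero.mpr hxy.ne')
  intro x hx y hy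
  rcases lt_trichotomy x y with h | h | h
  · exact key x hx y hy h
  · rw [h]
  · exact (key y hy x hx h).symm

theorem stmt_3 (G Ω : ℝ → ℝ) (Cω : ℝ) (hCω : Cω ≠ 0)
    (hG : ∀ x ∈ Ioo (0:ℝ) 1, DifferentiableAt ℝ G x)
    (hΩ : ∀ x ∈ Ioo (0:ℝ) 1, DifferentiableAt ℝ Ω x)
    (hGc : ContinuousOn G (Ioo 0 1)) (hΩc : ContinuousOn Ω (Ioo 0 1))
    (hlim : Tendsto Ω (nhdsWithin 1 (Iio 1)) (nhds Cω))
    (h1 : ∀ x ∈ Ioo (0:ℝ) 1, G x * Ω x = 0)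
    (h2 : ∀ x ∈ Ioo (0:ℝ) 1,
      2 * (deriv (fun y => G y ^ 2) x + 4 * x / (1 - x^2) * G x ^ 2)
        + deriv (fun y => Ω y ^ 2) x = 0) :
    ∀ x ∈ Ioo (0:ℝ) 1, G x = 0 ∧ Ω x = Cω := by
  -- Step 1: near 1, Ω is close to Cω
  have hball : ∀ᶠ y in nhdsWithin 1 (Iio 1), dist (Ω y) Cω < |Cω| :=
    hlim (Metric.ball_mem_nhds Cω (abs_pos.mpr hCω))
  obtain ⟨u, hu_open, hu1, hu_sub⟩ := mem_nhdsWithin.mp hball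
  obtain ⟨ε, hε, hεball⟩ := Metric.isOpen_iff.mp hu_open 1 hu1
  set x₀ : ℝ := max (1 - ε) (1/2) with hx₀def
  have hx₀ : x₀ ∈ Ioo (0:ℝ) 1 := by
    constructor
    · have : (0:ℝ) < 1/2 := by norm_num
      exact lt_of_lt_of_le this (le_max_right _ _)
    · apply max_lt <;> [linarith; norm_num]
  have hnear : ∀ y ∈ Ioo x₀ 1, dist (Ω y) Cω < |Cω| := by
    intro y hy
    apply hu_sub
    refine ⟨hεball ?_, hy.2⟩
    rw [Metric.mem_ball, Real.dist_eq, abs_sub_comm, abs_of_pos (by linarith [hy.2])]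
    have h1x : 1 - ε < y := lt_of_le_of_lt (le_max_left _ _) hy.1
    linarith
  have hΩne₀ : ∀ y ∈ Ioo x₀ 1, Ω y ≠ 0 := by
    intro y hy h0
    have := hnear y hy
    rw [h0, dist_comm, Real.dist_eq, sub_zero] at this
    exact lt_irrefl _ this
  -- Step 2: the infimum of thresholds
  set T : Set ℝ := {x | x ∈ Ico (0:ℝ) 1 ∧ ∀ y ∈ Ioo x 1, Ω y ≠ 0} with hTdef
  have hTne : T.Nonempty := ⟨x₀, ⟨hx₀.1.le, hx₀.2⟩, hΩne₀⟩
  have hTbdd : BddBelow T := ⟨0, fun x hx => hx.1.1⟩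
  set a : ℝ := sInf T with hadef
  have ha0 : 0 ≤ a := le_csInf hTne (fun x hx => hx.1.1)
  have hax₀ : a ≤ x₀ := csInf_le hTbdd ⟨⟨hx₀.1.le, hx₀.2⟩, hΩne₀⟩
  have ha1 : a < 1 := lt_of_le_of_lt hax₀ hx₀.2
  -- Ω nonzero on (a,1)
  have haprop : ∀ y ∈ Ioo a 1, Ω y ≠ 0 := by
    intro y hy
    obtain ⟨x, hxT, hxy⟩ := exists_lt_of_csInf_lt hTne hy.1
    exact hxT.2 y ⟨hxy, hy.2⟩
  -- Key: if Ω ≠ 0 on (a',1) then Ω² ≡ Cω² there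
  have key : ∀ a' : ℝ, 0 ≤ a' → a' < 1 → (∀ y ∈ Ioo a' 1, Ω y ≠ 0) →
      ∀ z ∈ Ioo a' 1, Ω z ^ 2 = Cω ^ 2 := by
    intro a' ha'0 ha'1 hne z hz
    have hsub : Ioo a' 1 ⊆ Ioo 0 1 := Ioo_subset_Ioo ha'0 le_rfl
    have hG0 : ∀ y ∈ Ioo a' 1, G y = 0 := fun y hy => by
      rcases mul_eq_zero.mp (h1 y (hsub hy)) with h | h
      · exact h
      · exact absurd h (hne y hy)
    have hderiv : ∀ y ∈ Ioo a' 1, HasDerivAt (fun w => Ω w ^ 2) 0 y := by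
      intro y hy
      have hyio := hsub hy
      have hev : (fun w => G w ^ 2) =ᶠ[nhds y] fun _ => 0 := by
        filter_upwards [isOpen_Ioo.mem_nhds hy] with w hw
        simp [hG0 w hw]
      have hdG : deriv (fun w => G w ^ 2) y = 0 := by
        rw [hev.deriv_eq]; simp
      have h2y := h2 y hyio
      rw [hdG, hG0 y hy] at h2y
      have hdΩ : deriv (fun w => Ω w ^ 2) y = 0 := by
        ring_nf at h2y ⊢; linarith
      have hdiff : DifferentiableAt ℝ (fun w => Ω w ^ 2) y := (hΩ y hyio).pow 2
      have hda := hdiff.hasDerivAt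
      rwa [hdΩ] at hda
    have hconst := const_of_hasDerivAt_zero (fun w => Ω w ^ 2) a' 1
      ((hΩc.mono hsub).pow 2) hderiv
    have hmem : Ioo a' 1 ∈ nhdsWithin 1 (Iio 1) := by
      rw [mem_nhdsWithin]
      exact ⟨Ioi a', isOpen_Ioi, ha'1, fun w hw => ⟨hw.1, hw.2⟩⟩
    have hev2 : (fun y => Ω y ^ 2) =ᶠ[nhdsWithin 1 (Iio 1)] fun _ => Ω z ^ 2 := by
      filter_upwards [hmem] with w hw
      exact hconst w hw z hz
    have ht1 : Tendsto (fun y => Ω y ^ 2) (nhdsWithin 1 (Iio 1)) (nhds (Cω ^ 2)) :=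
      hlim.pow 2
    have ht2 : Tendsto (fun y => Ω y ^ 2) (nhdsWithin 1 (Iio 1)) (nhds (Ω z ^ 2)) :=
      tendsto_const_nhds.congr' hev2.symm
    exact tendsto_nhds_unique ht2 ht1
  have hkeya := key a ha0 ha1 haprop
  -- Step 3: a = 0
  have haeq0 : a = 0 := by
    by_contra hane
    have hapos : 0 < a := lt_of_le_of_ne ha0 (Ne.symm hane)
    have haio : a ∈ Ioo (0:ℝ) 1 := ⟨hapos, ha1⟩
    have hcont : ContinuousAt (fun w => Ω w ^ 2) a := ((hΩ a haio).pow 2).continuousAt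
    have hnb : (nhdsWithin a (Ioo a 1)).NeBot := by
      rw [← mem_closure_iff_nhdsWithin_neBot, closure_Ioo (ne_of_lt ha1)]
      exact ⟨le_rfl, ha1.le⟩
    have ht : Tendsto (fun w => Ω w ^ 2) (nhdsWithin a (Ioo a 1)) (nhds (Ω a ^ 2)) :=
      hcont.tendsto.mono_left nhdsWithin_le_nhds
    have hev : (fun w => Ω w ^ 2) =ᶠ[nhdsWithin a (Ioo a 1)] fun _ => Cω ^ 2 := by
      filter_upwards [self_mem_nhdsWithin] with w hw
      exact hkeya w hw
    have ha2 : Ω a ^ 2 = Cω ^ 2 :=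
      tendsto_nhds_unique ht (tendsto_const_nhds.congr' hev.symm)
    have hΩa : Ω a ≠ 0 := by
      intro h0
      rw [h0] at ha2
      have hz2 : Cω ^ 2 = 0 := by simpa using ha2.symm
      exact hCω (pow_eq_zero_iff two_ne_zero |>.mp hz2)
    have hcΩ : ContinuousAt Ω a := (hΩ a haio).continuousAt
    have hevne : ∀ᶠ w in nhds a, Ω w ≠ 0 := hcΩ.eventually_ne hΩa
    obtain ⟨δ, hδ, hδball⟩ := Metric.eventually_nhds_iff.mp hevne
    set b : ℝ := max (a/2) (a - δ/2) with hbdef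
    have hb2 : a - δ/2 ≤ b := le_max_right _ _
    have hba : b < a := max_lt (by linarith) (by linarith)
    have hbT : b ∈ T := by
      refine ⟨⟨le_trans (by linarith) (le_max_left _ _), by linarith⟩, ?_⟩
      intro y hy
      rcases le_or_gt y a with h | h
      · apply hδball
        rw [Real.dist_eq, abs_of_nonpos (by linarith)]
        have := hy.1
        linarith
      · exact haprop y ⟨h, hy.2⟩
    have : a ≤ b := csInf_le hTbdd hbT
    linarith
  rw [haeq0] at haprop hkeya
  -- Step 4: conclude
  intro x hx
  have hGx : G x = 0 := by
    rcases mul_eq_zero.mp (h1 x hx) with h | h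
    · exact h
    · exact absurd h (haprop x hx)
    
  refine ⟨hGx, ?_⟩
  have hx2 := hkeya x hx
  have hfac : (Ω x - Cω) * (Ω x + Cω) = 0 := by linear_combination hx2
  rcases mul_eq_zero.mp hfac with h | h
  · linarith
  · exfalso
    have hΩx : Ω x = -Cω := by linarith
    set m : ℝ := max x x₀ with hmdef
    have hm1 : m < 1 := max_lt hx.2 hx₀.2
    set y : ℝ := (m + 1) / 2 with hydef
    have hym : m < y := by rw [hydef]; linarith
    have hy1 : y < 1 := by rw [hydef]; linarith
    have hyx : x < y := lt_of_le_of_lt (le_max_left _ _) hym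
    have hyx₀ : x₀ < y := lt_of_le_of_lt (le_max_right _ _) hym
    have hyio : y ∈ Ioo (0:ℝ) 1 := ⟨lt_trans hx₀.1 hyx₀, hy1⟩
    have hy2 := hkeya y hyio
    have hfacy : (Ω y - Cω) * (Ω y + Cω) = 0 := by linear_combination hy2
    have hΩy : Ω y = Cω := by
      rcases mul_eq_zero.mp hfacy with h' | h'
      · linarith
      · exfalso
        have := hnear y ⟨hyx₀, hy1⟩
        rw [Real.dist_eq] at this
        have hΩy' : Ω y = -Cω := by linarith
        rw [hΩy'] at this
        rcases abs_cases Cω with ⟨h1', h2'⟩ | ⟨h1', h2'⟩ <;>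
          rcases abs_cases (-Cω - Cω) with ⟨h3', h4'⟩ | ⟨h3', h4'⟩ <;> linarith
    have hsub2 : uIcc x y ⊆ Ioo (0:ℝ) 1 := by
      rw [uIcc_of_le hyx.le]
      exact fun z hz => ⟨lt_of_lt_of_le hx.1 hz.1, lt_of_le_of_lt hz.2 hy1⟩
    have hivt := intermediate_value_uIcc (hΩc.mono hsub2)
    have h0mem : (0:ℝ) ∈ uIcc (Ω x) (Ω y) := by
      rw [hΩx, hΩy]
      rcases le_or_gt 0 Cω with h' | h'
      · exact Set.mem_uIcc.mpr (Or.inl ⟨by linarith, h'⟩)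
      · exact Set.mem_uIcc.mpr (Or.inr ⟨h'.le, by linarith⟩)
    obtain ⟨z, hz, hz0⟩ := hivt h0mem
    exact haprop z (hsub2 hz) hz0
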